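/- arXiv:1410.5161 — 2 statements merged into one kernel-verified Lean document; each statement's English description precedes it below -/
import Mathlib

section
/- If (H, α, m, η, Δ, ε) is a monoidal Hom-bialgebra, then (H, α⁻¹∘m, η, Δ∘α, ε) is an ordinary bialgebra over k. -/
open TensorProduct

noncomputable section
namespace HomTwist

variable {k : Type*} [CommRing k]

section Defs
variable {H₁ H₂ A B : Type*} [AddCommGroup H₁] [Module k H₁] [AddCommGroup H₂] [Module k H₂]
  [AddCommGroup A] [Module k A] [AddCommGroup B] [Module k B]

/-- The componentwise "action" of `H₁ ⊗ H₂` on `A ⊗ B` induced by bilinear actions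
`f : H₁ → A → A` and `g : H₂ → B → B`:  `(h₁ ⊗ h₂) • (a ⊗ b) = (f h₁ a) ⊗ (g h₂ b)`. -/
def pairMap (f : H₁ →ₗ[k] A →ₗ[k] A) (g : H₂ →ₗ[k] B →ₗ[k] B) :
    (H₁ ⊗[k] H₂) →ₗ[k] (A ⊗[k] B) →ₗ[k] A ⊗[k] B :=
  TensorProduct.lift (((TensorProduct.mapBilinear (σ₁₂ := RingHom.id k) (M := A) (N := B) (M₂ := A) (N₂ := B)).comp f).compl₂ g)

end Defs

section Structures
variable {H : Type*} [AddCommGroup H] [Module k H]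

/-- Componentwise product on `H ⊗ H` induced by a bilinear multiplication on `H`. -/
def mulT (mul : H →ₗ[k] H →ₗ[k] H) : (H ⊗[k] H) →ₗ[k] (H ⊗[k] H) →ₗ[k] H ⊗[k] H :=
  pairMap mul mul

/-- Componentwise product on `H ⊗ (H ⊗ H)`. -/
def mulT3 (mul : H →ₗ[k] H →ₗ[k] H) :
    (H ⊗[k] (H ⊗[k] H)) →ₗ[k] (H ⊗[k] (H ⊗[k] H)) →ₗ[k] H ⊗[k] (H ⊗[k] H) :=
  pairMap mul (mulT mul)

/-- `(r ⊗ R) ↦ r⁽¹⁾ ⊗ (R⁽¹⁾ ⊗ r⁽²⁾R⁽²⁾)`. -/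
def hexA (mul : H →ₗ[k] H →ₗ[k] H) :
    ((H ⊗[k] H) ⊗[k] (H ⊗[k] H)) →ₗ[k] H ⊗[k] (H ⊗[k] H) :=
  (TensorProduct.assoc k H H H).toLinearMap
    ∘ₗ TensorProduct.map LinearMap.id (TensorProduct.lift mul)
    ∘ₗ (TensorProduct.tensorTensorTensorComm k H H H H).toLinearMap

/-- `(r ⊗ R) ↦ r⁽¹⁾R⁽¹⁾ ⊗ (R⁽²⁾ ⊗ r⁽²⁾)`. -/
def hexB (mul : H →ₗ[k] H →ₗ[k] H) :
    ((H ⊗[k] H) ⊗[k] (H ⊗[k] H)) →ₗ[k] H ⊗[k] (H ⊗[k] H) :=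
  TensorProduct.map (TensorProduct.lift mul) (TensorProduct.comm k H H).toLinearMap
    ∘ₗ (TensorProduct.tensorTensorTensorComm k H H H H).toLinearMap

/-- Axioms of a monoidal Hom-bialgebra (Caenepeel–Goyvaerts). -/
structure IsMonHomBialgebra (mul : H →ₗ[k] H →ₗ[k] H) (one : H) (alpha : H ≃ₗ[k] H)
    (comul : H →ₗ[k] H ⊗[k] H) (counit : H →ₗ[k] k) : Prop where
  alpha_mul : ∀ a b, alpha (mul a b) = mul (alpha a) (alpha b)
  hom_assoc : ∀ a b c, mul (alpha a) (mul b c) = mul (mul a b) (alpha c)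
  alpha_one : alpha one = one
  one_mul' : ∀ a, mul one a = alpha a
  mul_one' : ∀ a, mul a one = alpha a
  comul_alpha : ∀ c, comul (alpha c)
      = TensorProduct.map alpha.toLinearMap alpha.toLinearMap (comul c)
  hom_coassoc : ∀ c,
      TensorProduct.map alpha.symm.toLinearMap comul (comul c)
        = TensorProduct.assoc k H H H
            (TensorProduct.map comul alpha.symm.toLinearMap (comul c))
  counit_alpha : ∀ c, counit (alpha c) = counit c
  counit_id : ∀ c, TensorProduct.lid k H
      (TensorProduct.map counit LinearMap.id (comul c)) = alpha.symm c
  id_counit : ∀ c, TensorProduct.rid k H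
      (TensorProduct.map LinearMap.id counit (comul c)) = alpha.symm c
  comul_mul : ∀ a b, comul (mul a b) = mulT mul (comul a) (comul b)
  comul_one : comul one = one ⊗ₜ[k] one
  counit_mul : ∀ a b, counit (mul a b) = counit a * counit b
  counit_one : counit one = 1

/-- Axioms of a (Makhlouf–Silvestrov) Hom-bialgebra (with bijective structure map). -/
structure IsHomBialgebra (mul : H →ₗ[k] H →ₗ[k] H) (one : H) (alpha : H ≃ₗ[k] H)
    (comul : H →ₗ[k] H ⊗[k] H) (counit : H →ₗ[k] k) : Prop where
  alpha_mul : ∀ a b, alpha (mul a b) = mul (alpha a) (alpha b)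
  hom_assoc : ∀ a b c, mul (alpha a) (mul b c) = mul (mul a b) (alpha c)
  alpha_one : alpha one = one
  one_mul' : ∀ a, mul one a = alpha a
  mul_one' : ∀ a, mul a one = alpha a
  comul_alpha : ∀ c, comul (alpha c)
      = TensorProduct.map alpha.toLinearMap alpha.toLinearMap (comul c)
  hom_coassoc : ∀ c,
      TensorProduct.map alpha.toLinearMap comul (comul c)
        = TensorProduct.assoc k H H H
            (TensorProduct.map comul alpha.toLinearMap (comul c))
  counit_alpha : ∀ c, counit (alpha c) = counit c
  counit_id : ∀ c, TensorProduct.lid k H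
      (TensorProduct.map counit LinearMap.id (comul c)) = alpha c
  id_counit : ∀ c, TensorProduct.rid k H
      (TensorProduct.map LinearMap.id counit (comul c)) = alpha c
  comul_mul : ∀ a b, comul (mul a b) = mulT mul (comul a) (comul b)
  comul_one : comul one = one ⊗ₜ[k] one
  counit_mul : ∀ a b, counit (mul a b) = counit a * counit b
  counit_one : counit one = 1

/-- Axioms of an ordinary (possibly noncommutative) bialgebra, given by raw data. -/
structure IsBialgebra (mul : H →ₗ[k] H →ₗ[k] H) (one : H)
    (comul : H →ₗ[k] H ⊗[k] H) (counit : H →ₗ[k] k) : Prop where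
  assoc : ∀ a b c, mul (mul a b) c = mul a (mul b c)
  one_mul' : ∀ a, mul one a = a
  mul_one' : ∀ a, mul a one = a
  coassoc : ∀ c, TensorProduct.map LinearMap.id comul (comul c)
      = TensorProduct.assoc k H H H (TensorProduct.map comul LinearMap.id (comul c))
  counit_id : ∀ c, TensorProduct.lid k H
      (TensorProduct.map counit LinearMap.id (comul c)) = c
  id_counit : ∀ c, TensorProduct.rid k H
      (TensorProduct.map LinearMap.id counit (comul c)) = c
  comul_mul : ∀ a b, comul (mul a b) = mulT mul (comul a) (comul b)
  comul_one : comul one = one ⊗ₜ[k] one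
  counit_mul : ∀ a b, counit (mul a b) = counit a * counit b
  counit_one : counit one = 1

/-- A Drinfeld twist `σ` (with inverse `ϱ`) for a monoidal Hom-bialgebra. -/
structure IsTwist (mul : H →ₗ[k] H →ₗ[k] H) (one : H) (alpha : H ≃ₗ[k] H)
    (comul : H →ₗ[k] H ⊗[k] H) (counit : H →ₗ[k] k) (σ ϱ : H ⊗[k] H) : Prop where
  mul_inv : mulT mul σ ϱ = one ⊗ₜ[k] one
  inv_mul : mulT mul ϱ σ = one ⊗ₜ[k] one
  T1 : TensorProduct.map alpha.toLinearMap alpha.toLinearMap σ = σ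
  T2l : TensorProduct.lid k H (TensorProduct.map counit LinearMap.id σ) = one
  T2r : TensorProduct.rid k H (TensorProduct.map LinearMap.id counit σ) = one
  T3 : TensorProduct.map LinearMap.id (mulT mul σ)
        (TensorProduct.map LinearMap.id comul σ)
      = TensorProduct.assoc k H H H
          (TensorProduct.map (mulT mul σ) LinearMap.id
            (TensorProduct.map comul LinearMap.id σ))

/-- The `R`-matrix axioms (Q1)–(Q4) for a monoidal Hom-bialgebra. -/
structure IsRMatrix (mul : H →ₗ[k] H →ₗ[k] H) (alpha : H ≃ₗ[k] H)
    (comul : H →ₗ[k] H ⊗[k] H) (R : H ⊗[k] H) : Prop where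
  Q1 : TensorProduct.map alpha.toLinearMap alpha.toLinearMap R = R
  Q2 : ∀ h, mulT mul R (comul h)
      = mulT mul (TensorProduct.comm k H H (comul h)) R
  Q3 : TensorProduct.assoc k H H H (TensorProduct.map comul LinearMap.id R)
      = hexA mul (R ⊗ₜ[k] R)
  Q4 : TensorProduct.map LinearMap.id comul R = hexB mul (R ⊗ₜ[k] R)

/-- Axioms of a monoidal Hom-algebra. -/
structure IsMonHomAlgebra {A : Type*} [AddCommGroup A] [Module k A]
    (mul : A →ₗ[k] A →ₗ[k] A) (one : A) (alpha : A ≃ₗ[k] A) : Prop where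
  alpha_mul : ∀ a b, alpha (mul a b) = mul (alpha a) (alpha b)
  hom_assoc : ∀ a b c, mul (alpha a) (mul b c) = mul (mul a b) (alpha c)
  alpha_one : alpha one = one
  one_mul' : ∀ a, mul one a = alpha a
  mul_one' : ∀ a, mul a one = alpha a

/-- Axioms of a monoidal Hom-coalgebra. -/
structure IsMonHomCoalgebra {C : Type*} [AddCommGroup C] [Module k C]
    (comul : C →ₗ[k] C ⊗[k] C) (counit : C →ₗ[k] k) (alpha : C ≃ₗ[k] C) : Prop where
  comul_alpha : ∀ c, comul (alpha c)
      = TensorProduct.map alpha.toLinearMap alpha.toLinearMap (comul c)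
  hom_coassoc : ∀ c,
      TensorProduct.map alpha.symm.toLinearMap comul (comul c)
        = TensorProduct.assoc k C C C
            (TensorProduct.map comul alpha.symm.toLinearMap (comul c))
  counit_alpha : ∀ c, counit (alpha c) = counit c
  counit_id : ∀ c, TensorProduct.lid k C
      (TensorProduct.map counit LinearMap.id (comul c)) = alpha.symm c
  id_counit : ∀ c, TensorProduct.rid k C
      (TensorProduct.map LinearMap.id counit (comul c)) = alpha.symm c

/-- Axioms of a left `H`-Hom-module. -/
structure IsHomModule {M : Type*} [AddCommGroup M] [Module k M]
    (mul : H →ₗ[k] H →ₗ[k] H) (one : H) (alpha : H ≃ₗ[k] H)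
    (alM : M ≃ₗ[k] M) (act : H →ₗ[k] M →ₗ[k] M) : Prop where
  compat : ∀ h m, alM (act h m) = act (alpha h) (alM m)
  hom_smul : ∀ h h' m, act (alpha h) (act h' m) = act (mul h h') (alM m)
  one_smul' : ∀ m, act one m = alM m

/-- The twisted coproduct `Δᵠ(x) = (σ Δ(x)) ϱ`. -/
def twistComul (mul : H →ₗ[k] H →ₗ[k] H) (comul : H →ₗ[k] H ⊗[k] H)
    (σ ϱ : H ⊗[k] H) : H →ₗ[k] H ⊗[k] H :=
  ((mulT mul).flip ϱ) ∘ₗ (mulT mul σ) ∘ₗ comul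

end Structures
end HomTwist
end

namespace HomTwist
open TensorProduct

private lemma map_map {k : Type*} [CommRing k] {A B C D E F : Type*}
    [AddCommGroup A] [Module k A] [AddCommGroup B] [Module k B]
    [AddCommGroup C] [Module k C] [AddCommGroup D] [Module k D]
    [AddCommGroup E] [Module k E] [AddCommGroup F] [Module k F]
    (f : C →ₗ[k] E) (g : D →ₗ[k] F) (f' : A →ₗ[k] C) (g' : B →ₗ[k] D) (x : A ⊗[k] B) :
    TensorProduct.map f g (TensorProduct.map f' g' x)
      = TensorProduct.map (f ∘ₗ f') (g ∘ₗ g') x := by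
  rw [← LinearMap.comp_apply, ← TensorProduct.map_comp]

/-- If `(H, α, m, η, Δ, ε)` is a monoidal Hom-bialgebra, then
`(H, α⁻¹∘m, η, Δ∘α, ε)` is an ordinary bialgebra over `k`. -/
theorem monoidal_hom_bialgebra_untwist_is_bialgebra
    {k H : Type*} [CommRing k] [AddCommGroup H] [Module k H]
    (mul : H →ₗ[k] H →ₗ[k] H) (one : H) (alpha : H ≃ₗ[k] H)
    (comul : H →ₗ[k] H ⊗[k] H) (counit : H →ₗ[k] k)
    (hH : IsMonHomBialgebra mul one alpha comul counit) :
    IsBialgebra (mul.compr₂ alpha.symm.toLinearMap) one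
      (comul ∘ₗ alpha.toLinearMap) counit := by
  classical
  have inv_mul : ∀ x y, alpha.symm (mul x y) = mul (alpha.symm x) (alpha.symm y) := by
    intro x y
    apply alpha.injective
    rw [alpha.apply_symm_apply, hH.alpha_mul, alpha.apply_symm_apply, alpha.apply_symm_apply]
  have mulT_tmul : ∀ (m' : H →ₗ[k] H →ₗ[k] H) (a b c d : H),
      mulT m' (a ⊗ₜ[k] b) (c ⊗ₜ[k] d) = m' a c ⊗ₜ[k] m' b d := by
    intro m' a b c d
    simp [mulT, pairMap]
  have mulT_twist : ∀ (X Y : H ⊗[k] H),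
      mulT (mul.compr₂ alpha.symm.toLinearMap)
        (TensorProduct.map alpha.toLinearMap alpha.toLinearMap X)
        (TensorProduct.map alpha.toLinearMap alpha.toLinearMap Y)
      = mulT mul X Y := by
    intro X Y
    induction X using TensorProduct.induction_on with
    | zero => simp
    | tmul a b =>
      induction Y using TensorProduct.induction_on with
      | zero => simp
      | tmul c d =>
        simp only [TensorProduct.map_tmul, mulT_tmul, LinearMap.compr₂_apply,
          LinearEquiv.coe_coe]
        rw [← hH.alpha_mul, ← hH.alpha_mul, alpha.symm_apply_apply, alpha.symm_apply_apply]
      | add y₁ y₂ h₁ h₂ => simp only [map_add, h₁, h₂]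
    | add x₁ x₂ h₁ h₂ =>
      simp only [map_add, LinearMap.add_apply, h₁, h₂]
  have lid_nat : ∀ (f : H →ₗ[k] H) (X : H ⊗[k] H),
      TensorProduct.lid k H (TensorProduct.map counit f X)
        = f (TensorProduct.lid k H (TensorProduct.map counit LinearMap.id X)) := by
    intro f X
    induction X using TensorProduct.induction_on with
    | zero => simp
    | tmul a b => simp
    | add x y hx hy => simp [hx, hy]
  have rid_nat : ∀ (f : H →ₗ[k] H) (X : H ⊗[k] H),
      TensorProduct.rid k H (TensorProduct.map f counit X)
        = f (TensorProduct.rid k H (TensorProduct.map LinearMap.id counit X)) := by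
    intro f X
    induction X using TensorProduct.induction_on with
    | zero => simp
    | tmul a b => simp
    | add x y hx hy => simp [hx, hy]
  have hc : counit ∘ₗ (alpha.toLinearMap : H →ₗ[k] H) = counit := by
    apply LinearMap.ext
    intro x
    simpa using hH.counit_alpha x
  have hid : (LinearMap.id : H →ₗ[k] H) ∘ₗ (alpha.toLinearMap : H →ₗ[k] H)
      = (alpha.toLinearMap : H →ₗ[k] H) := by
    ext x; simp
  constructor
  · -- assoc
    intro a b c
    simp only [LinearMap.compr₂_apply, LinearEquiv.coe_coe]
    congr 1
    rw [inv_mul a b, inv_mul b c]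
    have h := hH.hom_assoc (alpha.symm a) (alpha.symm b) (alpha.symm c)
    rw [alpha.apply_symm_apply, alpha.apply_symm_apply] at h
    exact h.symm
  · intro a
    simp only [LinearMap.compr₂_apply, LinearEquiv.coe_coe, hH.one_mul',
      alpha.symm_apply_apply]
  · intro a
    simp only [LinearMap.compr₂_apply, LinearEquiv.coe_coe, hH.mul_one',
      alpha.symm_apply_apply]
  · -- coassoc
    intro c
    simp only [LinearMap.comp_apply, LinearEquiv.coe_coe]
    rw [hH.comul_alpha c, map_map, map_map]
    set β : H →ₗ[k] H := (alpha.trans alpha).toLinearMap with hβ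
    have hβ' : β = (alpha.toLinearMap : H →ₗ[k] H) ∘ₗ alpha.toLinearMap := by
      ext x; simp [hβ]
    have h1 : (comul ∘ₗ (alpha.toLinearMap : H →ₗ[k] H)) ∘ₗ alpha.toLinearMap
        = TensorProduct.map β β ∘ₗ comul := by
      apply LinearMap.ext
      intro x
      simp only [LinearMap.comp_apply, LinearEquiv.coe_coe]
      rw [hH.comul_alpha, hH.comul_alpha, map_map, hβ']
    have h2 : (LinearMap.id : H →ₗ[k] H) ∘ₗ (alpha.toLinearMap : H →ₗ[k] H)
        = β ∘ₗ alpha.symm.toLinearMap := by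
      ext x; simp [hβ]
    rw [h1, h2,
      ← map_map β (TensorProduct.map β β) alpha.symm.toLinearMap comul (comul c),
      ← map_map (TensorProduct.map β β) β comul alpha.symm.toLinearMap (comul c),
      ← TensorProduct.map_map_assoc, ← hH.hom_coassoc c]
  · -- counit_id
    intro c
    simp only [LinearMap.comp_apply, LinearEquiv.coe_coe]
    rw [hH.comul_alpha c, map_map, hc, hid, lid_nat, hH.counit_id]
    simp
  · -- id_counit
    intro c
    simp only [LinearMap.comp_apply, LinearEquiv.coe_coe]
    rw [hH.comul_alpha c, map_map, hc, hid, rid_nat, hH.id_counit]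
    simp
  · -- comul_mul
    intro a b
    simp only [LinearMap.comp_apply, LinearEquiv.coe_coe, LinearMap.compr₂_apply,
      alpha.apply_symm_apply]
    rw [hH.comul_mul, hH.comul_alpha, hH.comul_alpha, mulT_twist]
  · simp only [LinearMap.comp_apply, LinearEquiv.coe_coe, hH.alpha_one, hH.comul_one]
  · intro a b
    simp only [LinearMap.compr₂_apply, LinearEquiv.coe_coe]
    have h : counit (alpha.symm (mul a b)) = counit (mul a b) := by
      conv_rhs => rw [← alpha.apply_symm_apply (mul a b), hH.counit_alpha]
    rw [h, hH.counit_mul]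
  · exact hH.counit_one

end HomTwist
end

section
/- Let (H, α, m, η, Δ, ε, S) be a Hom-Hopf algebra with α invertible. Then the antipode S is anti-comultiplicative: Δ(S(a)) = S(a₂) ⊗ S(a₁) for all a ∈ H, and ε∘S = ε. -/
open TensorProduct

namespace HomTwist
open TensorProduct

noncomputable section AntipodeAux

variable {k H : Type*} [CommRing k] [AddCommGroup H] [Module k H]

private lemma tmap_tmap {A B C D E F : Type*}
    [AddCommGroup A] [Module k A] [AddCommGroup B] [Module k B]
    [AddCommGroup C] [Module k C] [AddCommGroup D] [Module k D]
    [AddCommGroup E] [Module k E] [AddCommGroup F] [Module k F]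
    (f : B →ₗ[k] C) (g : E →ₗ[k] F) (p : A →ₗ[k] B) (q : D →ₗ[k] E) (w : A ⊗[k] D) :
    TensorProduct.map f g (TensorProduct.map p q w)
      = TensorProduct.map (f ∘ₗ p) (g ∘ₗ q) w := by
  rw [← LinearMap.comp_apply, ← TensorProduct.map_comp]

private lemma mulT_tmul (mul : H →ₗ[k] H →ₗ[k] H) (a b c d : H) :
    mulT mul (a ⊗ₜ[k] b) (c ⊗ₜ[k] d) = mul a c ⊗ₜ[k] mul b d := rfl

private lemma mulT_assoc (mul : H →ₗ[k] H →ₗ[k] H)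
    (hassoc : ∀ a b c, mul (mul a b) c = mul a (mul b c)) (x y z : H ⊗[k] H) :
    mulT mul (mulT mul x y) z = mulT mul x (mulT mul y z) := by
  induction x using TensorProduct.induction_on with
  | zero => simp
  | add x₁ x₂ h₁ h₂ => simp [h₁, h₂]
  | tmul a b =>
    induction y using TensorProduct.induction_on with
    | zero => simp
    | add y₁ y₂ h₁ h₂ => simp [h₁, h₂]
    | tmul c d =>
      induction z using TensorProduct.induction_on with
      | zero => simp
      | add z₁ z₂ h₁ h₂ => simp [h₁, h₂]
      | tmul e f' => simp [mulT_tmul, hassoc]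

private lemma mulT_one_left (mul : H →ₗ[k] H →ₗ[k] H) (one : H)
    (hone : ∀ a, mul one a = a) (t : H ⊗[k] H) :
    mulT mul (one ⊗ₜ[k] one) t = t := by
  induction t using TensorProduct.induction_on with
  | zero => simp
  | add a b ha hb => simp [ha, hb]
  | tmul a b => simp [mulT_tmul, hone]

private lemma mulT_one_right (mul : H →ₗ[k] H →ₗ[k] H) (one : H)
    (hone' : ∀ a, mul a one = a) (t : H ⊗[k] H) :
    mulT mul t (one ⊗ₜ[k] one) = t := by
  induction t using TensorProduct.induction_on with
  | zero => simp
  | add a b ha hb => simp [ha, hb]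
  | tmul a b => simp [mulT_tmul, hone']

/-- Composition in the first tensor factor. -/
private lemma map_fst_fst {A B C D : Type*} [AddCommGroup A] [Module k A]
    [AddCommGroup B] [Module k B] [AddCommGroup C] [Module k C]
    [AddCommGroup D] [Module k D]
    (f : B →ₗ[k] C) (g : A →ₗ[k] B) (w : A ⊗[k] D) :
    TensorProduct.map f LinearMap.id (TensorProduct.map g LinearMap.id w)
      = TensorProduct.map (f ∘ₗ g) LinearMap.id w := by
  rw [← LinearMap.comp_apply, ← TensorProduct.map_comp, LinearMap.id_comp]

/-- Composition in the second tensor factor. -/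
private lemma map_snd_snd {A B C D : Type*} [AddCommGroup A] [Module k A]
    [AddCommGroup B] [Module k B] [AddCommGroup C] [Module k C]
    [AddCommGroup D] [Module k D]
    (f : B →ₗ[k] C) (g : A →ₗ[k] B) (w : D ⊗[k] A) :
    TensorProduct.map LinearMap.id f (TensorProduct.map LinearMap.id g w)
      = TensorProduct.map LinearMap.id (f ∘ₗ g) w := by
  rw [← LinearMap.comp_apply, ← TensorProduct.map_comp, LinearMap.id_comp]

/-- The multiplication on `H ⊗ H`, as a map `(H⊗H)⊗(H⊗H) → H⊗H`. -/
private noncomputable def M2 (mul : H →ₗ[k] H →ₗ[k] H) :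
    ((H ⊗[k] H) ⊗[k] (H ⊗[k] H)) →ₗ[k] H ⊗[k] H := TensorProduct.lift (mulT mul)

private lemma M2_tmul (mul : H →ₗ[k] H →ₗ[k] H) (u v : H ⊗[k] H) :
    M2 mul (u ⊗ₜ[k] v) = mulT mul u v := rfl

/-- Convolution product on `Hom(H, H ⊗ H)`. -/
private noncomputable def cnv (mul : H →ₗ[k] H →ₗ[k] H) (comul : H →ₗ[k] H ⊗[k] H)
    (f g : H →ₗ[k] H ⊗[k] H) : H →ₗ[k] H ⊗[k] H :=
  M2 mul ∘ₗ TensorProduct.map f g ∘ₗ comul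

private lemma cnv_apply (mul : H →ₗ[k] H →ₗ[k] H) (comul : H →ₗ[k] H ⊗[k] H)
    (f g : H →ₗ[k] H ⊗[k] H) (x : H) :
    cnv mul comul f g x = M2 mul (TensorProduct.map f g (comul x)) := rfl

private lemma M2_assoc (mul : H →ₗ[k] H →ₗ[k] H)
    (hassoc : ∀ a b c, mul (mul a b) c = mul a (mul b c)) :
    M2 mul ∘ₗ TensorProduct.map LinearMap.id (M2 mul)
        ∘ₗ (TensorProduct.assoc k (H ⊗[k] H) (H ⊗[k] H) (H ⊗[k] H)).toLinearMap
      = M2 mul ∘ₗ TensorProduct.map (M2 mul) LinearMap.id := by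
  apply TensorProduct.ext_threefold
  intro x y z
  simp only [LinearMap.comp_apply, LinearEquiv.coe_coe, TensorProduct.assoc_tmul,
    TensorProduct.map_tmul, LinearMap.id_coe, id_eq, M2_tmul]
  exact (mulT_assoc mul hassoc x y z).symm

private lemma cnv_assoc (mul : H →ₗ[k] H →ₗ[k] H) (comul : H →ₗ[k] H ⊗[k] H)
    (hassoc : ∀ a b c, mul (mul a b) c = mul a (mul b c))
    (hco : ∀ c, TensorProduct.map LinearMap.id comul (comul c)
        = TensorProduct.assoc k H H H (TensorProduct.map comul LinearMap.id (comul c)))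
    (f g h : H →ₗ[k] H ⊗[k] H) :
    cnv mul comul (cnv mul comul f g) h = cnv mul comul f (cnv mul comul g h) := by
  have e1 : (TensorProduct.map (cnv mul comul f g) h :
        H ⊗[k] H →ₗ[k] (H ⊗[k] H) ⊗[k] (H ⊗[k] H))
      = TensorProduct.map (M2 mul) LinearMap.id
          ∘ₗ TensorProduct.map (TensorProduct.map f g) h
          ∘ₗ TensorProduct.map comul LinearMap.id :=
    TensorProduct.ext' fun a b => by
      simp [cnv_apply, TensorProduct.map_tmul]
  have e2 : (TensorProduct.map f (cnv mul comul g h) :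
        H ⊗[k] H →ₗ[k] (H ⊗[k] H) ⊗[k] (H ⊗[k] H))
      = TensorProduct.map LinearMap.id (M2 mul)
          ∘ₗ TensorProduct.map f (TensorProduct.map g h)
          ∘ₗ TensorProduct.map LinearMap.id comul :=
    TensorProduct.ext' fun a b => by
      simp [cnv_apply, TensorProduct.map_tmul]
  refine LinearMap.ext fun x => ?_
  rw [cnv_apply, cnv_apply, e1, e2]
  simp only [LinearMap.comp_apply]
  rw [hco x, TensorProduct.map_map_assoc]
  have K := LinearMap.congr_fun (M2_assoc mul hassoc)
    (TensorProduct.map (TensorProduct.map f g) h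
      (TensorProduct.map comul LinearMap.id (comul x)))
  simp only [LinearMap.comp_apply, LinearEquiv.coe_coe] at K
  exact K.symm

private lemma cnv_unit_left (mul : H →ₗ[k] H →ₗ[k] H) (one : H)
    (comul : H →ₗ[k] H ⊗[k] H) (counit : H →ₗ[k] k)
    (hone : ∀ a, mul one a = a)
    (hcid : ∀ c, TensorProduct.lid k H
        (TensorProduct.map counit LinearMap.id (comul c)) = c)
    (f : H →ₗ[k] H ⊗[k] H) :
    cnv mul comul (counit.smulRight (one ⊗ₜ[k] one)) f = f := by
  have step : (M2 mul ∘ₗ TensorProduct.map (counit.smulRight (one ⊗ₜ[k] one)) f :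
        H ⊗[k] H →ₗ[k] H ⊗[k] H)
      = f ∘ₗ (TensorProduct.lid k H).toLinearMap
          ∘ₗ TensorProduct.map counit LinearMap.id := by
    apply TensorProduct.ext'
    intro a b
    simp only [LinearMap.comp_apply, TensorProduct.map_tmul, LinearMap.smulRight_apply,
      LinearMap.id_coe, id_eq, LinearEquiv.coe_coe, TensorProduct.lid_tmul, map_smul]
    rw [← TensorProduct.smul_tmul', map_smul, M2_tmul, mulT_one_left mul one hone]
  refine LinearMap.ext fun x => ?_
  rw [cnv_apply]
  have h := LinearMap.congr_fun step (comul x)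
  simp only [LinearMap.comp_apply, LinearEquiv.coe_coe] at h
  rw [h, hcid x]

private lemma cnv_unit_right (mul : H →ₗ[k] H →ₗ[k] H) (one : H)
    (comul : H →ₗ[k] H ⊗[k] H) (counit : H →ₗ[k] k)
    (hone' : ∀ a, mul a one = a)
    (hidc : ∀ c, TensorProduct.rid k H
        (TensorProduct.map LinearMap.id counit (comul c)) = c)
    (f : H →ₗ[k] H ⊗[k] H) :
    cnv mul comul f (counit.smulRight (one ⊗ₜ[k] one)) = f := by
  have step : (M2 mul ∘ₗ TensorProduct.map f (counit.smulRight (one ⊗ₜ[k] one)) :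
        H ⊗[k] H →ₗ[k] H ⊗[k] H)
      = f ∘ₗ (TensorProduct.rid k H).toLinearMap
          ∘ₗ TensorProduct.map LinearMap.id counit := by
    apply TensorProduct.ext'
    intro a b
    simp only [LinearMap.comp_apply, TensorProduct.map_tmul, LinearMap.smulRight_apply,
      LinearMap.id_coe, id_eq, LinearEquiv.coe_coe, TensorProduct.rid_tmul, map_smul]
    rw [TensorProduct.tmul_smul, map_smul, M2_tmul, mulT_one_right mul one hone']
  refine LinearMap.ext fun x => ?_
  rw [cnv_apply]
  have h := LinearMap.congr_fun step (comul x)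
  simp only [LinearMap.comp_apply, LinearEquiv.coe_coe] at h
  rw [h, hidc x]

private lemma cnv_antipode_left (mul : H →ₗ[k] H →ₗ[k] H) (one : H)
    (comul : H →ₗ[k] H ⊗[k] H) (counit : H →ₗ[k] k) (S : H →ₗ[k] H)
    (hcm : ∀ a b, comul (mul a b) = mulT mul (comul a) (comul b))
    (hc1 : comul one = one ⊗ₜ[k] one)
    (hS₁ : ∀ x, TensorProduct.lift mul
        (TensorProduct.map S LinearMap.id (comul x)) = counit x • one) :
    cnv mul comul (comul ∘ₗ S) comul = counit.smulRight (one ⊗ₜ[k] one) := by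
  have e3 : (M2 mul ∘ₗ TensorProduct.map comul comul :
        H ⊗[k] H →ₗ[k] H ⊗[k] H) = comul ∘ₗ TensorProduct.lift mul := by
    apply TensorProduct.ext'
    intro a b
    simp only [LinearMap.comp_apply, TensorProduct.map_tmul, M2_tmul,
      TensorProduct.lift.tmul]
    exact (hcm a b).symm
  refine LinearMap.ext fun x => ?_
  rw [cnv_apply]
  have hsplit : TensorProduct.map (comul ∘ₗ S) comul
      = TensorProduct.map comul comul ∘ₗ TensorProduct.map S LinearMap.id := by
    rw [← TensorProduct.map_comp, LinearMap.comp_id]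
  rw [hsplit, LinearMap.comp_apply, ← LinearMap.comp_apply (M2 mul), e3,
    LinearMap.comp_apply, hS₁ x]
  simp [hc1]

private lemma omega_eq (mul : H →ₗ[k] H →ₗ[k] H) (S : H →ₗ[k] H)
    (w : H ⊗[k] ((H ⊗[k] H) ⊗[k] H)) :
    M2 mul (TensorProduct.map LinearMap.id
        ((TensorProduct.comm k H H).toLinearMap ∘ₗ TensorProduct.map S S)
      ((TensorProduct.assoc k (H ⊗[k] H) H H)
        (TensorProduct.map (TensorProduct.assoc k H H H).symm.toLinearMap LinearMap.id
          ((TensorProduct.assoc k H (H ⊗[k] H) H).symm w))))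
    = TensorProduct.map (TensorProduct.lift mul ∘ₗ TensorProduct.map LinearMap.id S)
        (TensorProduct.lift mul ∘ₗ TensorProduct.map LinearMap.id S)
        ((TensorProduct.assoc k H H (H ⊗[k] H)).symm
          (TensorProduct.map LinearMap.id
            (TensorProduct.comm k (H ⊗[k] H) H).toLinearMap w)) := by
  induction w using TensorProduct.induction_on with
  | zero => simp
  | add u v hu hv => simp only [map_add, hu, hv]
  | tmul a y =>
    induction y using TensorProduct.induction_on with
    | zero => simp
    | add u v hu hv => simp only [TensorProduct.tmul_add, map_add, hu, hv]
    | tmul u d =>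
      induction u using TensorProduct.induction_on with
      | zero => simp
      | add u₁ u₂ h₁ h₂ =>
        simp only [TensorProduct.add_tmul, TensorProduct.tmul_add, map_add, h₁, h₂]
      | tmul b c =>
        simp [M2_tmul, mulT_tmul, TensorProduct.assoc_tmul, TensorProduct.assoc_symm_tmul,
          TensorProduct.comm_tmul, TensorProduct.map_tmul, TensorProduct.lift.tmul]

private lemma sigma_nat (comul : H →ₗ[k] H ⊗[k] H) (w : H ⊗[k] (H ⊗[k] H)) :
    (TensorProduct.assoc k H H (H ⊗[k] H)).symm
        (TensorProduct.map LinearMap.id (TensorProduct.comm k (H ⊗[k] H) H).toLinearMap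
          (TensorProduct.map LinearMap.id (TensorProduct.map comul LinearMap.id) w))
      = TensorProduct.map LinearMap.id comul
          ((TensorProduct.assoc k H H H).symm
            (TensorProduct.map LinearMap.id (TensorProduct.comm k H H).toLinearMap w)) := by
  induction w using TensorProduct.induction_on with
  | zero => simp
  | add u v hu hv => simp only [map_add, hu, hv]
  | tmul a y =>
    induction y using TensorProduct.induction_on with
    | zero => simp
    | add u v hu hv => simp only [TensorProduct.tmul_add, map_add, hu, hv]
    | tmul u v =>
      simp [TensorProduct.map_tmul, TensorProduct.comm_tmul, TensorProduct.assoc_symm_tmul]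

private lemma final_collapse (mul : H →ₗ[k] H →ₗ[k] H) (one : H)
    (counit : H →ₗ[k] k) (S : H →ₗ[k] H) (w : H ⊗[k] (H ⊗[k] H)) :
    TensorProduct.map (TensorProduct.lift mul ∘ₗ TensorProduct.map LinearMap.id S)
        (counit.smulRight one)
        ((TensorProduct.assoc k H H H).symm
          (TensorProduct.map LinearMap.id (TensorProduct.comm k H H).toLinearMap w))
      = (TensorProduct.mk k H H).flip one
          ((TensorProduct.lift mul ∘ₗ TensorProduct.map LinearMap.id S)
            (TensorProduct.map LinearMap.id
              ((TensorProduct.lid k H).toLinearMap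
                ∘ₗ TensorProduct.map counit LinearMap.id) w)) := by
  induction w using TensorProduct.induction_on with
  | zero => simp
  | add u v hu hv => simp only [map_add, hu, hv]
  | tmul a y =>
    induction y using TensorProduct.induction_on with
    | zero => simp
    | add u v hu hv => simp only [TensorProduct.tmul_add, map_add, hu, hv]
    | tmul u v =>
      simp only [LinearMap.comp_apply, TensorProduct.map_tmul, LinearMap.id_coe, id_eq,
        LinearEquiv.coe_coe, TensorProduct.comm_tmul, TensorProduct.assoc_symm_tmul,
        TensorProduct.lid_tmul, LinearMap.smulRight_apply, TensorProduct.lift.tmul,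
        TensorProduct.tmul_smul, map_smul, TensorProduct.mk_apply, LinearMap.flip_apply]

private lemma cnv_antipode_right (mul : H →ₗ[k] H →ₗ[k] H) (one : H)
    (comul : H →ₗ[k] H ⊗[k] H) (counit : H →ₗ[k] k) (S : H →ₗ[k] H)
    (hco : ∀ c, TensorProduct.map LinearMap.id comul (comul c)
        = TensorProduct.assoc k H H H (TensorProduct.map comul LinearMap.id (comul c)))
    (hcid : ∀ c, TensorProduct.lid k H
        (TensorProduct.map counit LinearMap.id (comul c)) = c)
    (hS₂ : ∀ x, TensorProduct.lift mul
        (TensorProduct.map LinearMap.id S (comul x)) = counit x • one) :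
    cnv mul comul comul
        ((TensorProduct.comm k H H).toLinearMap ∘ₗ TensorProduct.map S S ∘ₗ comul)
      = counit.smulRight (one ⊗ₜ[k] one) := by
  refine LinearMap.ext fun x => ?_
  rw [cnv_apply]
  have s1 : (M2 mul ∘ₗ TensorProduct.map comul
        ((TensorProduct.comm k H H).toLinearMap ∘ₗ TensorProduct.map S S ∘ₗ comul) :
        H ⊗[k] H →ₗ[k] H ⊗[k] H)
      = (M2 mul ∘ₗ TensorProduct.map LinearMap.id
            ((TensorProduct.comm k H H).toLinearMap ∘ₗ TensorProduct.map S S))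
          ∘ₗ TensorProduct.map comul LinearMap.id
          ∘ₗ TensorProduct.map LinearMap.id comul := by
    apply TensorProduct.ext'
    intro a b
    simp only [LinearMap.comp_apply, TensorProduct.map_tmul, LinearMap.id_coe, id_eq]
  have h1 := LinearMap.congr_fun s1 (comul x)
  simp only [LinearMap.comp_apply] at h1
  rw [h1, hco x]
  have nat1 : ∀ w : (H ⊗[k] H) ⊗[k] H,
      TensorProduct.map comul LinearMap.id ((TensorProduct.assoc k H H H) w)
        = (TensorProduct.assoc k (H ⊗[k] H) H H)
            (TensorProduct.map (TensorProduct.map comul LinearMap.id) LinearMap.id w) := by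
    intro w
    have := TensorProduct.map_map_assoc comul LinearMap.id LinearMap.id w
    simpa [TensorProduct.map_id] using this
  rw [nat1]
  have hC1' : (TensorProduct.map comul LinearMap.id ∘ₗ comul :
        H →ₗ[k] (H ⊗[k] H) ⊗[k] H)
      = (TensorProduct.assoc k H H H).symm.toLinearMap
          ∘ₗ TensorProduct.map LinearMap.id comul ∘ₗ comul := by
    refine LinearMap.ext fun c => ?_
    simp only [LinearMap.comp_apply, LinearEquiv.coe_coe]
    rw [hco c, LinearEquiv.symm_apply_apply]
  have comb : TensorProduct.map (TensorProduct.map comul LinearMap.id) LinearMap.id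
        (TensorProduct.map comul LinearMap.id (comul x))
      = TensorProduct.map (TensorProduct.assoc k H H H).symm.toLinearMap LinearMap.id
          (TensorProduct.map (TensorProduct.map LinearMap.id comul) LinearMap.id
            (TensorProduct.map comul LinearMap.id (comul x))) := by
    rw [map_fst_fst, hC1', ← map_fst_fst, ← map_fst_fst]
  rw [comb]
  have ht0 : TensorProduct.map comul LinearMap.id (comul x)
      = (TensorProduct.assoc k H H H).symm
          (TensorProduct.map LinearMap.id comul (comul x)) := by
    rw [hco x, LinearEquiv.symm_apply_apply]
  rw [ht0]
  have nat2 : ∀ w : H ⊗[k] (H ⊗[k] H),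
      TensorProduct.map (TensorProduct.map LinearMap.id comul) LinearMap.id
          ((TensorProduct.assoc k H H H).symm w)
        = (TensorProduct.assoc k H (H ⊗[k] H) H).symm
            (TensorProduct.map LinearMap.id (TensorProduct.map comul LinearMap.id) w) := by
    intro w
    have := TensorProduct.map_map_assoc_symm LinearMap.id comul LinearMap.id w
    simpa [TensorProduct.map_id] using this
  rw [nat2, omega_eq, sigma_nat]
  have hν : (TensorProduct.lift mul ∘ₗ TensorProduct.map LinearMap.id S) ∘ₗ comul
      = counit.smulRight one :=
    LinearMap.ext fun c => by simpa using hS₂ c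
  have comb2 : ∀ z : (H ⊗[k] H) ⊗[k] H,
      TensorProduct.map (TensorProduct.lift mul ∘ₗ TensorProduct.map LinearMap.id S)
          (TensorProduct.lift mul ∘ₗ TensorProduct.map LinearMap.id S)
          (TensorProduct.map LinearMap.id comul z)
        = TensorProduct.map (TensorProduct.lift mul ∘ₗ TensorProduct.map LinearMap.id S)
            (counit.smulRight one) z := by
    intro z
    rw [← LinearMap.comp_apply, ← TensorProduct.map_comp, LinearMap.comp_id, hν]
  rw [comb2, final_collapse]
  have hκ : (((TensorProduct.lid k H).toLinearMap
      ∘ₗ TensorProduct.map counit LinearMap.id) ∘ₗ comul : H →ₗ[k] H) = LinearMap.id :=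
    LinearMap.ext fun c => by simpa using hcid c
  have h6 : TensorProduct.map LinearMap.id
        ((TensorProduct.lid k H).toLinearMap ∘ₗ TensorProduct.map counit LinearMap.id)
        (TensorProduct.map LinearMap.id comul (comul x)) = comul x := by
    rw [map_snd_snd, hκ, TensorProduct.map_id, LinearMap.id_apply]
  rw [h6]
  simp only [LinearMap.comp_apply]
  rw [hS₂ x]
  simp [TensorProduct.mk_apply, TensorProduct.smul_tmul']

/-- Antipode anti-comultiplicativity for an ordinary (raw-data) bialgebra. -/
private theorem ord_antipode (mul : H →ₗ[k] H →ₗ[k] H) (one : H)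
    (comul : H →ₗ[k] H ⊗[k] H) (counit : H →ₗ[k] k) (S : H →ₗ[k] H)
    (hassoc : ∀ a b c, mul (mul a b) c = mul a (mul b c))
    (hone : ∀ a, mul one a = a)
    (hone' : ∀ a, mul a one = a)
    (hco : ∀ c, TensorProduct.map LinearMap.id comul (comul c)
        = TensorProduct.assoc k H H H (TensorProduct.map comul LinearMap.id (comul c)))
    (hcid : ∀ c, TensorProduct.lid k H
        (TensorProduct.map counit LinearMap.id (comul c)) = c)
    (hidc : ∀ c, TensorProduct.rid k H
        (TensorProduct.map LinearMap.id counit (comul c)) = c)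
    (hcm : ∀ a b, comul (mul a b) = mulT mul (comul a) (comul b))
    (hc1 : comul one = one ⊗ₜ[k] one)
    (hεm : ∀ a b, counit (mul a b) = counit a * counit b)
    (hε1 : counit one = 1)
    (hS₁ : ∀ x, TensorProduct.lift mul
        (TensorProduct.map S LinearMap.id (comul x)) = counit x • one)
    (hS₂ : ∀ x, TensorProduct.lift mul
        (TensorProduct.map LinearMap.id S (comul x)) = counit x • one) :
    (∀ a, comul (S a)
        = TensorProduct.comm k H H (TensorProduct.map S S (comul a)))
      ∧ ∀ a, counit (S a) = counit a := by
  have hb : ∀ a, counit (S a) = counit a := by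
    intro a
    have h2 : (counit ∘ₗ TensorProduct.lift mul ∘ₗ TensorProduct.map S LinearMap.id :
          H ⊗[k] H →ₗ[k] k)
        = (counit ∘ₗ S) ∘ₗ (TensorProduct.rid k H).toLinearMap
            ∘ₗ TensorProduct.map LinearMap.id counit := by
      apply TensorProduct.ext'
      intro u v
      simp only [LinearMap.comp_apply, TensorProduct.map_tmul, LinearMap.id_coe, id_eq,
        LinearEquiv.coe_coe, TensorProduct.rid_tmul, TensorProduct.lift.tmul, map_smul,
        smul_eq_mul, hεm]
      ring
    have h3 := LinearMap.congr_fun h2 (comul a)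
    simp only [LinearMap.comp_apply, LinearEquiv.coe_coe] at h3
    rw [hS₁ a, hidc a] at h3
    simpa [hε1] using h3.symm
  refine ⟨fun a => ?_, hb⟩
  have key : comul ∘ₗ S
      = (TensorProduct.comm k H H).toLinearMap ∘ₗ TensorProduct.map S S ∘ₗ comul := by
    calc comul ∘ₗ S
        = cnv mul comul (comul ∘ₗ S) (counit.smulRight (one ⊗ₜ[k] one)) :=
          (cnv_unit_right mul one comul counit hone' hidc _).symm
      _ = cnv mul comul (comul ∘ₗ S)
            (cnv mul comul comul
              ((TensorProduct.comm k H H).toLinearMap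
                ∘ₗ TensorProduct.map S S ∘ₗ comul)) := by
          rw [cnv_antipode_right mul one comul counit S hco hcid hS₂]
      _ = cnv mul comul (cnv mul comul (comul ∘ₗ S) comul)
            ((TensorProduct.comm k H H).toLinearMap
              ∘ₗ TensorProduct.map S S ∘ₗ comul) :=
          (cnv_assoc mul comul hassoc hco _ _ _).symm
      _ = cnv mul comul (counit.smulRight (one ⊗ₜ[k] one))
            ((TensorProduct.comm k H H).toLinearMap
              ∘ₗ TensorProduct.map S S ∘ₗ comul) := by
          rw [cnv_antipode_left mul one comul counit S hcm hc1 hS₁]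
      _ = (TensorProduct.comm k H H).toLinearMap ∘ₗ TensorProduct.map S S ∘ₗ comul :=
          cnv_unit_left mul one comul counit hone hcid _
  have := LinearMap.congr_fun key a
  simpa only [LinearMap.comp_apply, LinearEquiv.coe_coe] using this

end AntipodeAux

/-- The antipode of a Hom-Hopf algebra (with invertible structure
map `α`) is anti-comultiplicative and preserves the counit. -/
theorem hom_hopf_antipode_anti_comul
    {k H : Type*} [CommRing k] [AddCommGroup H] [Module k H]
    (mul : H →ₗ[k] H →ₗ[k] H) (one : H) (alpha : H ≃ₗ[k] H)
    (comul : H →ₗ[k] H ⊗[k] H) (counit : H →ₗ[k] k) (S : H →ₗ[k] H)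
    (hH : IsHomBialgebra mul one alpha comul counit)
    (hS₁ : ∀ x, TensorProduct.lift mul
        (TensorProduct.map S LinearMap.id (comul x)) = counit x • one)
    (hS₂ : ∀ x, TensorProduct.lift mul
        (TensorProduct.map LinearMap.id S (comul x)) = counit x • one)
    (hSα : ∀ x, S (alpha x) = alpha (S x)) :
    (∀ a, comul (S a)
        = TensorProduct.comm k H H (TensorProduct.map S S (comul a)))
      ∧ ∀ a, counit (S a) = counit a := by
  -- `β := α⁻¹` untwists the Hom-bialgebra into an ordinary bialgebra.
  have hβm : ∀ p q, alpha.symm (mul p q) = mul (alpha.symm p) (alpha.symm q) := by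
    intro p q
    apply alpha.injective
    rw [alpha.apply_symm_apply, hH.alpha_mul, alpha.apply_symm_apply,
      alpha.apply_symm_apply]
  have hβ1 : alpha.symm one = one := by
    apply alpha.injective
    rw [alpha.apply_symm_apply, hH.alpha_one]
  have hεβ : ∀ x, counit (alpha.symm x) = counit x := by
    intro x
    conv_rhs => rw [← alpha.apply_symm_apply x]
    rw [hH.counit_alpha]
  have hSβ : ∀ x, S (alpha.symm x) = alpha.symm (S x) := by
    intro x
    apply alpha.injective
    rw [← hSα, alpha.apply_symm_apply, alpha.apply_symm_apply]
  have hΔβ : ∀ t, comul (alpha.symm t)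
      = TensorProduct.map alpha.symm.toLinearMap alpha.symm.toLinearMap (comul t) := by
    intro t
    have hinj : Function.Injective
        (TensorProduct.map alpha.toLinearMap alpha.toLinearMap :
          H ⊗[k] H →ₗ[k] H ⊗[k] H) := by
      have he : (TensorProduct.map alpha.toLinearMap alpha.toLinearMap :
          H ⊗[k] H →ₗ[k] H ⊗[k] H) = (TensorProduct.congr alpha alpha).toLinearMap :=
        TensorProduct.ext' fun u v => by simp [TensorProduct.congr_tmul]
      rw [he]
      exact (TensorProduct.congr alpha alpha).injective
    apply hinj
    have h1 : TensorProduct.map alpha.toLinearMap alpha.toLinearMap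
        (TensorProduct.map alpha.symm.toLinearMap alpha.symm.toLinearMap (comul t))
        = comul t := by
      rw [tmap_tmap]
      have hαβ : alpha.toLinearMap ∘ₗ alpha.symm.toLinearMap = (LinearMap.id : H →ₗ[k] H) :=
        LinearMap.ext fun y => alpha.apply_symm_apply y
      rw [hαβ, TensorProduct.map_id, LinearMap.id_apply]
    rw [h1, ← hH.comul_alpha, alpha.apply_symm_apply]
  set mul' : H →ₗ[k] H →ₗ[k] H := mul.compr₂ alpha.symm.toLinearMap with hmul'def
  set comul' : H →ₗ[k] H ⊗[k] H :=
    TensorProduct.map alpha.symm.toLinearMap alpha.symm.toLinearMap ∘ₗ comul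
    with hcomul'def
  have hmul'_apply : ∀ p q, mul' p q = alpha.symm (mul p q) := fun p q => rfl
  have hcomul'_apply : ∀ c, comul' c
      = TensorProduct.map alpha.symm.toLinearMap alpha.symm.toLinearMap (comul c) :=
    fun c => rfl
  have hβα : alpha.symm.toLinearMap ∘ₗ alpha.toLinearMap = (LinearMap.id : H →ₗ[k] H) :=
    LinearMap.ext fun y => alpha.symm_apply_apply y
  -- associativity of the untwisted product
  have hassoc' : ∀ p q r, mul' (mul' p q) r = mul' p (mul' q r) := by
    intro p q r
    rw [hmul'_apply, hmul'_apply, hmul'_apply, hmul'_apply, hβm p q, hβm q r]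
    apply congrArg
    calc mul (mul (alpha.symm p) (alpha.symm q)) r
        = mul (mul (alpha.symm p) (alpha.symm q)) (alpha (alpha.symm r)) := by
          rw [alpha.apply_symm_apply]
      _ = mul (alpha (alpha.symm p)) (mul (alpha.symm q) (alpha.symm r)) :=
          (hH.hom_assoc _ _ _).symm
      _ = mul p (mul (alpha.symm q) (alpha.symm r)) := by rw [alpha.apply_symm_apply]
  have hone₁ : ∀ p, mul' one p = p := by
    intro p
    rw [hmul'_apply, hH.one_mul']
    exact alpha.symm_apply_apply p
  have hone₂ : ∀ p, mul' p one = p := by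
    intro p
    rw [hmul'_apply, hH.mul_one']
    exact alpha.symm_apply_apply p
  -- coassociativity of the untwisted coproduct
  have hcb : comul' ∘ₗ alpha.symm.toLinearMap
      = TensorProduct.map (alpha.symm.toLinearMap ∘ₗ alpha.symm.toLinearMap)
          (alpha.symm.toLinearMap ∘ₗ alpha.symm.toLinearMap) ∘ₗ comul := by
    refine LinearMap.ext fun t => ?_
    simp only [LinearMap.comp_apply]
    rw [hcomul'_apply]
    simp only [LinearEquiv.coe_coe]
    rw [hΔβ t, tmap_tmap]
  have hco' : ∀ c, TensorProduct.map LinearMap.id comul' (comul' c)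
      = TensorProduct.assoc k H H H
          (TensorProduct.map comul' LinearMap.id (comul' c)) := by
    intro c
    rw [hcomul'_apply c]
    have l3 : TensorProduct.map LinearMap.id comul (comul c)
        = TensorProduct.map alpha.symm.toLinearMap LinearMap.id
            (TensorProduct.map alpha.toLinearMap comul (comul c)) := by
      rw [tmap_tmap, hβα, LinearMap.id_comp]
    calc TensorProduct.map LinearMap.id comul'
          (TensorProduct.map alpha.symm.toLinearMap alpha.symm.toLinearMap (comul c))
        = TensorProduct.map alpha.symm.toLinearMap (comul' ∘ₗ alpha.symm.toLinearMap)
            (comul c) := by rw [tmap_tmap, LinearMap.id_comp]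
      _ = TensorProduct.map alpha.symm.toLinearMap
            (TensorProduct.map (alpha.symm.toLinearMap ∘ₗ alpha.symm.toLinearMap)
              (alpha.symm.toLinearMap ∘ₗ alpha.symm.toLinearMap) ∘ₗ comul) (comul c) := by
          rw [hcb]
      _ = TensorProduct.map alpha.symm.toLinearMap
            (TensorProduct.map (alpha.symm.toLinearMap ∘ₗ alpha.symm.toLinearMap)
              (alpha.symm.toLinearMap ∘ₗ alpha.symm.toLinearMap))
            (TensorProduct.map LinearMap.id comul (comul c)) := by
          rw [tmap_tmap, LinearMap.comp_id]
      _ = TensorProduct.map alpha.symm.toLinearMap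
            (TensorProduct.map (alpha.symm.toLinearMap ∘ₗ alpha.symm.toLinearMap)
              (alpha.symm.toLinearMap ∘ₗ alpha.symm.toLinearMap))
            (TensorProduct.map alpha.symm.toLinearMap LinearMap.id
              (TensorProduct.map alpha.toLinearMap comul (comul c))) := by rw [l3]
      _ = TensorProduct.map (alpha.symm.toLinearMap ∘ₗ alpha.symm.toLinearMap)
            (TensorProduct.map (alpha.symm.toLinearMap ∘ₗ alpha.symm.toLinearMap)
              (alpha.symm.toLinearMap ∘ₗ alpha.symm.toLinearMap))
            (TensorProduct.map alpha.toLinearMap comul (comul c)) := by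
          rw [tmap_tmap, LinearMap.comp_id]
      _ = TensorProduct.map (alpha.symm.toLinearMap ∘ₗ alpha.symm.toLinearMap)
            (TensorProduct.map (alpha.symm.toLinearMap ∘ₗ alpha.symm.toLinearMap)
              (alpha.symm.toLinearMap ∘ₗ alpha.symm.toLinearMap))
            (TensorProduct.assoc k H H H
              (TensorProduct.map comul alpha.toLinearMap (comul c))) := by
          rw [hH.hom_coassoc c]
      _ = TensorProduct.assoc k H H H
            (TensorProduct.map
              (TensorProduct.map (alpha.symm.toLinearMap ∘ₗ alpha.symm.toLinearMap)
                (alpha.symm.toLinearMap ∘ₗ alpha.symm.toLinearMap))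
              (alpha.symm.toLinearMap ∘ₗ alpha.symm.toLinearMap)
              (TensorProduct.map comul alpha.toLinearMap (comul c))) := by
          rw [TensorProduct.map_map_assoc]
      _ = TensorProduct.assoc k H H H
            (TensorProduct.map
              (TensorProduct.map (alpha.symm.toLinearMap ∘ₗ alpha.symm.toLinearMap)
                (alpha.symm.toLinearMap ∘ₗ alpha.symm.toLinearMap) ∘ₗ comul)
              ((alpha.symm.toLinearMap ∘ₗ alpha.symm.toLinearMap) ∘ₗ alpha.toLinearMap)
              (comul c)) := by rw [tmap_tmap]
      _ = TensorProduct.assoc k H H H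
            (TensorProduct.map (comul' ∘ₗ alpha.symm.toLinearMap)
              alpha.symm.toLinearMap (comul c)) := by
          rw [← hcb, LinearMap.comp_assoc alpha.toLinearMap alpha.symm.toLinearMap
            alpha.symm.toLinearMap, hβα, LinearMap.comp_id]
      _ = TensorProduct.assoc k H H H
            (TensorProduct.map comul' LinearMap.id
              (TensorProduct.map alpha.symm.toLinearMap alpha.symm.toLinearMap
                (comul c))) := by
          rw [tmap_tmap, LinearMap.id_comp]
  -- counit laws for the untwisted coproduct
  have hεβc : counit ∘ₗ alpha.symm.toLinearMap = counit := LinearMap.ext fun y => hεβ y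
  have hcid' : ∀ c, TensorProduct.lid k H
      (TensorProduct.map counit LinearMap.id (comul' c)) = c := by
    intro c
    rw [hcomul'_apply c, tmap_tmap, LinearMap.id_comp, hεβc]
    have l : ∀ w : H ⊗[k] H,
        TensorProduct.lid k H (TensorProduct.map counit alpha.symm.toLinearMap w)
          = alpha.symm (TensorProduct.lid k H
              (TensorProduct.map counit LinearMap.id w)) := by
      intro w
      induction w using TensorProduct.induction_on with
      | zero => simp
      | add u v hu hv => simp only [map_add, hu, hv]
      | tmul u v => simp [TensorProduct.lid_tmul]
    rw [l (comul c), hH.counit_id c]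
    exact alpha.symm_apply_apply c
  have hidc' : ∀ c, TensorProduct.rid k H
      (TensorProduct.map LinearMap.id counit (comul' c)) = c := by
    intro c
    rw [hcomul'_apply c, tmap_tmap, LinearMap.id_comp, hεβc]
    have l : ∀ w : H ⊗[k] H,
        TensorProduct.rid k H (TensorProduct.map alpha.symm.toLinearMap counit w)
          = alpha.symm (TensorProduct.rid k H
              (TensorProduct.map LinearMap.id counit w)) := by
      intro w
      induction w using TensorProduct.induction_on with
      | zero => simp
      | add u v hu hv => simp only [map_add, hu, hv]
      | tmul u v => simp [TensorProduct.rid_tmul]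
    rw [l (comul c), hH.id_counit c]
    exact alpha.symm_apply_apply c
  -- multiplicativity of the untwisted coproduct
  have HM : ∀ s t : H ⊗[k] H,
      mulT mul' (TensorProduct.map alpha.symm.toLinearMap alpha.symm.toLinearMap s)
          (TensorProduct.map alpha.symm.toLinearMap alpha.symm.toLinearMap t)
        = TensorProduct.map alpha.symm.toLinearMap alpha.symm.toLinearMap
            (TensorProduct.map alpha.symm.toLinearMap alpha.symm.toLinearMap
              (mulT mul s t)) := by
    intro s t
    induction s using TensorProduct.induction_on with
    | zero => simp
    | add u v hu hv => simp only [map_add, LinearMap.add_apply, hu, hv]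
    | tmul p q =>
      induction t using TensorProduct.induction_on with
      | zero => simp
      | add u v hu hv => simp only [map_add, hu, hv]
      | tmul r s' =>
        simp only [TensorProduct.map_tmul, HomTwist.mulT_tmul, LinearEquiv.coe_coe]
        rw [hmul'_apply, hmul'_apply, ← hβm p r, ← hβm q s']
  have hcm' : ∀ p q, comul' (mul' p q) = mulT mul' (comul' p) (comul' q) := by
    intro p q
    rw [hcomul'_apply, hmul'_apply, hcomul'_apply, hcomul'_apply,
      hΔβ (mul p q), hH.comul_mul, HM]
  have hc1' : comul' one = one ⊗ₜ[k] one := by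
    rw [hcomul'_apply, hH.comul_one]
    simp only [TensorProduct.map_tmul, LinearEquiv.coe_coe]
    rw [hβ1]
  have hεm' : ∀ p q, counit (mul' p q) = counit p * counit q := by
    intro p q
    rw [hmul'_apply, hεβ, hH.counit_mul]
  -- antipode conditions for the untwisted structure
  have hSb : S ∘ₗ alpha.symm.toLinearMap = alpha.symm.toLinearMap ∘ₗ S :=
    LinearMap.ext fun y => hSβ y
  have hliftβ : ∀ u : H ⊗[k] H,
      TensorProduct.lift mul'
          (TensorProduct.map alpha.symm.toLinearMap alpha.symm.toLinearMap u)
        = alpha.symm (alpha.symm (TensorProduct.lift mul u)) := by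
    intro u
    induction u using TensorProduct.induction_on with
    | zero => simp
    | add u v hu hv => simp only [map_add, hu, hv]
    | tmul p q =>
      simp only [TensorProduct.map_tmul, TensorProduct.lift.tmul, LinearEquiv.coe_coe]
      rw [hmul'_apply, ← hβm]
  have hS₁' : ∀ x, TensorProduct.lift mul'
      (TensorProduct.map S LinearMap.id (comul' x)) = counit x • one := by
    intro x
    have hswap : ∀ w : H ⊗[k] H, TensorProduct.map S LinearMap.id
        (TensorProduct.map alpha.symm.toLinearMap alpha.symm.toLinearMap w)
        = TensorProduct.map alpha.symm.toLinearMap alpha.symm.toLinearMap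
            (TensorProduct.map S LinearMap.id w) := by
      intro w
      rw [tmap_tmap, tmap_tmap, hSb, LinearMap.id_comp, LinearMap.comp_id]
    rw [hcomul'_apply, hswap, hliftβ, hS₁ x]
    simp only [map_smul]
    rw [hβ1, hβ1]
  have hS₂' : ∀ x, TensorProduct.lift mul'
      (TensorProduct.map LinearMap.id S (comul' x)) = counit x • one := by
    intro x
    have hswap : ∀ w : H ⊗[k] H, TensorProduct.map LinearMap.id S
        (TensorProduct.map alpha.symm.toLinearMap alpha.symm.toLinearMap w)
        = TensorProduct.map alpha.symm.toLinearMap alpha.symm.toLinearMap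
            (TensorProduct.map LinearMap.id S w) := by
      intro w
      rw [tmap_tmap, tmap_tmap, hSb, LinearMap.id_comp, LinearMap.comp_id]
    rw [hcomul'_apply, hswap, hliftβ, hS₂ x]
    simp only [map_smul]
    rw [hβ1, hβ1]
  -- apply the ordinary-bialgebra result to the untwisted structure
  obtain ⟨hA, hB⟩ := ord_antipode mul' one comul' counit S hassoc' hone₁ hone₂
    hco' hcid' hidc' hcm' hc1' hεm' hH.counit_one hS₁' hS₂'
  refine ⟨fun a => ?_, hB⟩
  have h := hA a
  rw [hcomul'_apply (S a), hcomul'_apply a] at h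
  have hswapSS : ∀ w : H ⊗[k] H, TensorProduct.map S S
      (TensorProduct.map alpha.symm.toLinearMap alpha.symm.toLinearMap w)
      = TensorProduct.map alpha.symm.toLinearMap alpha.symm.toLinearMap
          (TensorProduct.map S S w) := by
    intro w
    rw [tmap_tmap, tmap_tmap, hSb]
  rw [hswapSS] at h
  have hswapτ : ∀ w : H ⊗[k] H, TensorProduct.comm k H H
      (TensorProduct.map alpha.symm.toLinearMap alpha.symm.toLinearMap w)
      = TensorProduct.map alpha.symm.toLinearMap alpha.symm.toLinearMap
          (TensorProduct.comm k H H w) := by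
    intro w
    exact (TensorProduct.map_comm alpha.symm.toLinearMap alpha.symm.toLinearMap w).symm
  rw [hswapτ] at h
  have hinjβ : Function.Injective
      (TensorProduct.map alpha.symm.toLinearMap alpha.symm.toLinearMap :
        H ⊗[k] H →ₗ[k] H ⊗[k] H) := by
    have he : (TensorProduct.map alpha.symm.toLinearMap alpha.symm.toLinearMap :
        H ⊗[k] H →ₗ[k] H ⊗[k] H)
        = (TensorProduct.congr alpha.symm alpha.symm).toLinearMap :=
      TensorProduct.ext' fun u v => by simp [TensorProduct.congr_tmul]
    rw [he]
    exact (TensorProduct.congr alpha.symm alpha.symm).injective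
  exact hinjβ h

end HomTwist
end
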